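/- Write (q^2;q)_∞ = Σ_{j≥0} a_j q^j. For every nonnegative integer j there exists a unique nonnegative integer n with p_2(2n) ≤ j < p_2(2n+2), and the coefficient a_j equals: 1 if p_2(2n) ≤ j < p_1(2n+1); -1 if p_2(2n+1) ≤ j < p_1(2n+2); and 0 otherwise. In particular, the power series (q^2;q)_∞ is of Bloch–Pólya type, i.e., every a_j lies in {-1, 0, 1}. -/

import Mathlib

/-- The first family of pentagonal numbers, `p₁(n) = n(3n-1)/2`. -/
def p1 (n : ℕ) : ℤ := (n * (3 * n - 1)) / 2

/-- The second family of pentagonal numbers, `p₂(n) = n(3n+1)/2`. -/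
def p2 (n : ℕ) : ℤ := (n * (3 * n + 1)) / 2

/-- The infinite product `(q^a;q)_∞ = ∏_{i ≥ 0} (1 - q^{a+i})` in `ℤ[[q]]` (for `a ≥ 1`),
defined coefficientwise: factors `1 - q^{a+i}` with `a + i > n` do not affect the
coefficient of `q^n`, so the coefficient of `q^n` equals that of the partial product
`∏_{i ≤ n} (1 - q^{a+i})`. -/
noncomputable def pochInf (a : ℕ) : PowerSeries ℤ :=
  PowerSeries.mk fun n =>
    (∏ i ∈ Finset.range (n + 1), (1 - Polynomial.X ^ (a + i)) : Polynomial ℤ).coeff n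

/-- `a j` is the coefficient of `q^j` in `(q^2;q)_∞`. -/
noncomputable def a (j : ℕ) : ℤ := PowerSeries.coeff j (pochInf 2)


def nP1 (n : ℕ) : ℕ := n * (3 * n - 1) / 2
def nP2 (n : ℕ) : ℕ := n * (3 * n + 1) / 2

lemma aux1 (n : ℕ) : n * (3 * n - 1) = 3 * (n * n) - n := by
  cases n with
  | zero => rfl
  | succ m =>
    have h : 3 * (m + 1) - 1 = 3 * m + 2 := by omega
    rw [h]
    have h2 : (m + 1) * (3 * m + 2) + (m + 1) = 3 * ((m + 1) * (m + 1)) := by ring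
    omega

lemma aux2 (n : ℕ) : n * (3 * n + 1) = 3 * (n * n) + n := by ring

lemma aux3 (n : ℕ) : n ≤ 3 * (n * n) := by
  rcases Nat.eq_zero_or_pos n with h | h
  · simp [h]
  · calc n = 1 * n := (one_mul n).symm
      _ ≤ 3 * (n * n) := Nat.mul_le_mul (by omega) (Nat.le_mul_of_pos_left n h)

lemma nP1_cast (n : ℕ) : (nP1 n : ℤ) = p1 n := by
  unfold nP1 p1
  rw [aux1]
  have h4 : ((3 * (n * n) - n : ℕ) : ℤ) = 3 * (n : ℤ) * n - n := by
    push_cast [aux3 n]; ring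
  have h5 : (n : ℤ) * (3 * n - 1) = 3 * n * n - n := by ring
  rw [h5, ← h4]
  generalize (3 * (n * n) - n : ℕ) = A
  omega

lemma nP2_cast (n : ℕ) : (nP2 n : ℤ) = p2 n := by
  unfold nP2 p2
  rw [aux2]
  have h4 : ((3 * (n * n) + n : ℕ) : ℤ) = 3 * (n : ℤ) * n + n := by push_cast; ring
  have h5 : (n : ℤ) * (3 * n + 1) = 3 * n * n + n := by ring
  rw [h5, ← h4]
  generalize (3 * (n * n) + n : ℕ) = A
  omega

lemma nP1_succ (n : ℕ) : nP1 (n + 1) = nP1 n + (3 * n + 1) := by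
  unfold nP1
  rw [aux1, aux1]
  have e : (n+1) * (n+1) = n * n + (2*n+1) := by ring
  rw [e]
  have := aux3 n
  omega

lemma nP2_succ (n : ℕ) : nP2 (n + 1) = nP2 n + (3 * n + 2) := by
  unfold nP2
  rw [aux2, aux2]
  have e : (n+1) * (n+1) = n * n + (2*n+1) := by ring
  rw [e]
  omega

lemma nP2_eq (n : ℕ) : nP2 n = nP1 n + n := by
  unfold nP1 nP2
  rw [aux1, aux2]
  have := aux3 n
  omega

lemma nP1_lt_nP2 {n : ℕ} (h : 1 ≤ n) : nP1 n < nP2 n := by rw [nP2_eq]; omega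

lemma nP1_le_nP2 (n : ℕ) : nP1 n ≤ nP2 n := by rw [nP2_eq]; omega

lemma nP2_lt_nP1_succ (n : ℕ) : nP2 n < nP1 (n + 1) := by
  rw [nP2_eq, nP1_succ]; omega

lemma nP1_mono : StrictMono nP1 :=
  strictMono_nat_of_lt_succ fun n => lt_of_le_of_lt (nP1_le_nP2 n) (nP2_lt_nP1_succ n)

lemma nP2_mono : StrictMono nP2 :=
  strictMono_nat_of_lt_succ fun n => lt_of_lt_of_le (nP2_lt_nP1_succ n) (nP1_le_nP2 (n+1))

lemma le_nP1 (n : ℕ) : n ≤ nP1 n := by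
  induction n with
  | zero => simp [nP1]
  | succ m ih => rw [nP1_succ]; omega

lemma le_nP2 (n : ℕ) : n ≤ nP2 n := le_trans (le_nP1 n) (nP1_le_nP2 n)

lemma two_le_nP1 (n : ℕ) : 2 * n ≤ nP1 n + 1 := by
  induction n with
  | zero => simp
  | succ m ih => rw [nP1_succ]; omega

lemma two_le_nP2 (n : ℕ) : 2 * n ≤ nP2 n := by rw [nP2_eq]; have := two_le_nP1 n; omega

lemma nP1_zero : nP1 0 = 0 := rfl
lemma nP2_zero : nP2 0 = 0 := rfl
lemma nP1_one : nP1 1 = 1 := rfl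

open Finset

def fmax (S : Finset ℕ) : ℕ := WithBot.unbotD 0 S.max
def fmin (S : Finset ℕ) : ℕ := WithTop.untopD 0 S.min

lemma fmax_mem {S : Finset ℕ} (h : S.Nonempty) : fmax S ∈ S := by
  obtain ⟨b, hb⟩ := Finset.max_of_nonempty h
  simpa [fmax, hb] using Finset.mem_of_max hb

lemma le_fmax {S : Finset ℕ} {x : ℕ} (h : x ∈ S) : x ≤ fmax S := by
  obtain ⟨b, hb⟩ := Finset.max_of_mem h
  have h2 := Finset.le_max h
  rw [hb] at h2
  have : x ≤ b := by exact_mod_cast h2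
  simpa [fmax, hb] using this

lemma fmax_eq {S : Finset ℕ} {a : ℕ} (h : a ∈ S) (h2 : ∀ x ∈ S, x ≤ a) : fmax S = a :=
  le_antisymm (by
    obtain ⟨b, hb⟩ := Finset.max_of_mem h
    simpa [fmax, hb] using h2 b (Finset.mem_of_max hb)) (le_fmax h)

lemma fmin_mem {S : Finset ℕ} (h : S.Nonempty) : fmin S ∈ S := by
  obtain ⟨b, hb⟩ := Finset.min_of_nonempty h
  rw [fmin, hb]; exact Finset.mem_of_min hb

lemma fmin_le {S : Finset ℕ} {x : ℕ} (h : x ∈ S) : fmin S ≤ x := by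
  obtain ⟨b, hb⟩ := Finset.min_of_mem h
  have h2 := Finset.min_le h
  rw [hb] at h2
  have : b ≤ x := by exact_mod_cast h2
  rw [fmin, hb]; exact this

lemma fmin_eq {S : Finset ℕ} {a : ℕ} (h : a ∈ S) (h2 : ∀ x ∈ S, a ≤ x) : fmin S = a :=
  le_antisymm (fmin_le h) (by
    obtain ⟨b, hb⟩ := Finset.min_of_mem h
    rw [fmin, hb]; exact h2 b (Finset.mem_of_min hb))

/-- length of the maximal staircase at the top of `S` (whose max is `M`) -/
def stair (S : Finset ℕ) (M : ℕ) : ℕ :=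
  Nat.findGreatest (fun i => Finset.Icc (M + 1 - i) M ⊆ S) M

lemma stair_facts {S : Finset ℕ} {M : ℕ} (hM : M ∈ S) (h0 : 0 ∉ S)
    (hub : ∀ x ∈ S, x ≤ M) :
    1 ≤ stair S M ∧ stair S M ≤ M ∧ Finset.Icc (M + 1 - stair S M) M ⊆ S ∧
      M - stair S M ∉ S := by
  have hM1 : 1 ≤ M := by
    rcases Nat.eq_zero_or_pos M with h | h
    · exact absurd (h ▸ hM) h0
    · exact h
  have hP1 : Finset.Icc (M + 1 - 1) M ⊆ S := by
    intro x hx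
    simp only [Finset.mem_Icc] at hx
    have : x = M := by omega
    exact this ▸ hM
  simp only [stair]
  set F := Nat.findGreatest (fun i => Finset.Icc (M + 1 - i) M ⊆ S) M with hF
  have h1 : 1 ≤ F :=
    Nat.le_findGreatest (P := fun i => Finset.Icc (M + 1 - i) M ⊆ S) hM1 hP1
  have h2 : F ≤ M := Nat.findGreatest_le M
  have h3 : Finset.Icc (M + 1 - F) M ⊆ S := by
    have h3' := Nat.findGreatest_spec (P := fun i => Finset.Icc (M + 1 - i) M ⊆ S) hM1 hP1
    rw [← hF] at h3'
    exact h3'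
  refine ⟨h1, h2, h3, ?_⟩
  rcases eq_or_lt_of_le h2 with he | hlt
  · have he0 : M - F = 0 := by omega
    rw [he0]; exact h0
  · have hng := Nat.findGreatest_is_greatest (P := fun i => Finset.Icc (M + 1 - i) M ⊆ S)
      (hF ▸ Nat.lt_succ_self F) hlt
    intro hc
    apply hng
    intro x hx
    simp only [Finset.mem_Icc] at hx
    by_cases hx2 : x = M - F
    · exact hx2 ▸ hc
    · exact h3 (by simp only [Finset.mem_Icc]; omega)

lemma stair_eq {S : Finset ℕ} {M t0 : ℕ} (h0 : 0 ∉ S) (h1 : 1 ≤ t0) (h2 : t0 ≤ M)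
    (h3 : Finset.Icc (M + 1 - t0) M ⊆ S) (h4 : M - t0 ∉ S) : stair S M = t0 := by
  rw [stair, Nat.findGreatest_eq_iff]
  refine ⟨h2, fun _ => h3, ?_⟩
  intro m hlt hle hP
  apply h4
  apply hP
  simp only [Finset.mem_Icc]
  omega

lemma stair_ge {S : Finset ℕ} {M t0 : ℕ} (h2 : t0 ≤ M)
    (h3 : Finset.Icc (M + 1 - t0) M ⊆ S) : t0 ≤ stair S M :=
  Nat.le_findGreatest h2 h3

lemma fmin_E1 {m : ℕ} (h : 1 ≤ m) : fmin (Finset.Icc m (2*m-1)) = m :=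
  fmin_eq (by simp only [Finset.mem_Icc]; omega) (by intro x hx; simp only [Finset.mem_Icc] at hx; omega)

lemma fmax_E1 {m : ℕ} (h : 1 ≤ m) : fmax (Finset.Icc m (2*m-1)) = 2*m-1 :=
  fmax_eq (by simp only [Finset.mem_Icc]; omega) (by intro x hx; simp only [Finset.mem_Icc] at hx; omega)

lemma fmin_E2 {m : ℕ} (h : 1 ≤ m) : fmin (Finset.Icc (m+1) (2*m)) = m+1 :=
  fmin_eq (by simp only [Finset.mem_Icc]; omega) (by intro x hx; simp only [Finset.mem_Icc] at hx; omega)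

lemma fmax_E2 {m : ℕ} (h : 1 ≤ m) : fmax (Finset.Icc (m+1) (2*m)) = 2*m :=
  fmax_eq (by simp only [Finset.mem_Icc]; omega) (by intro x hx; simp only [Finset.mem_Icc] at hx; omega)

lemma stair_E1 {m : ℕ} (h : 1 ≤ m) : stair (Finset.Icc m (2*m-1)) (2*m-1) = m :=
  stair_eq (by intro hc; simp only [Finset.mem_Icc] at hc; omega) h (by omega)
    (by intro x hx; simp only [Finset.mem_Icc] at hx ⊢; omega)
    (by intro hc; simp only [Finset.mem_Icc] at hc; omega)

lemma stair_E2 {m : ℕ} (h : 1 ≤ m) : stair (Finset.Icc (m+1) (2*m)) (2*m) = m :=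
  stair_eq (by intro hc; simp only [Finset.mem_Icc] at hc; omega) h (by omega)
    (by intro x hx; simp only [Finset.mem_Icc] at hx ⊢; omega)
    (by intro hc; simp only [Finset.mem_Icc] at hc; omega)

def isPent (S : Finset ℕ) : Prop :=
  ∃ m, 1 ≤ m ∧ (S = Finset.Icc m (2*m-1) ∨ S = Finset.Icc (m+1) (2*m))

/-- Franklin's involution. -/
def frank (S : Finset ℕ) : Finset ℕ :=
  if fmin S ≤ stair S (fmax S) then
    insert (fmax S + 1) ((S.erase (fmin S)).erase (fmax S + 1 - fmin S))
  else
    insert (stair S (fmax S)) (insert (fmax S - stair S (fmax S)) (S.erase (fmax S)))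

lemma frank_spec {S : Finset ℕ} (h : S.Nonempty) (h0 : 0 ∉ S) (hp : ¬ isPent S) :
    (frank S).Nonempty ∧ (0 ∉ frank S) ∧ ¬ isPent (frank S) ∧
    (frank S).sum id = S.sum id ∧
    (S.card = (frank S).card + 1 ∨ (frank S).card = S.card + 1) ∧
    frank (frank S) = S := by
  set M := fmax S with hM
  set s := fmin S with hs
  set t := stair S M with ht
  have hMS : M ∈ S := fmax_mem h
  have hub : ∀ x ∈ S, x ≤ M := fun x hx => le_fmax hx
  have hsS : s ∈ S := fmin_mem h
  have hlb : ∀ x ∈ S, s ≤ x := fun x hx => fmin_le hx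
  have hs1 : 1 ≤ s := by
    rcases Nat.eq_zero_or_pos s with h' | h'
    · exact absurd (h' ▸ hsS) h0
    · exact h'
  obtain ⟨ht1, htM, hrun, hgap⟩ := stair_facts hMS h0 hub
  have hsM : s ≤ M := hub s hsS
  by_cases hcase : s ≤ t
  · -- Case A
    have hfr : frank S = insert (M+1) ((S.erase s).erase (M+1-s)) := by
      rw [frank, if_pos hcase]
    have hM2s : 2*s ≤ M := by
      by_contra hM'
      push_neg at hM'
      apply hp
      refine ⟨s, hs1, Or.inl ?_⟩
      have hSIcc : S = Finset.Icc s M := by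
        apply Finset.Subset.antisymm
        · intro x hx; simp only [Finset.mem_Icc]; exact ⟨hlb x hx, hub x hx⟩
        · intro x hx
          simp only [Finset.mem_Icc] at hx
          apply hrun
          simp only [Finset.mem_Icc]
          omega
      have h5 : M - t < s := by
        by_contra h6
        push_neg at h6
        apply hgap
        rw [hSIcc]
        simp only [Finset.mem_Icc]
        omega
      have h7 : s ≤ M+1-t := by
        apply hlb
        apply hrun
        simp only [Finset.mem_Icc]
        omega
      have hMeq : M = 2*s - 1 := by omega
      rw [hSIcc, hMeq]
    have hmem1 : M+1-s ∈ S := hrun (by simp only [Finset.mem_Icc]; omega)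
    have hne1 : s ≠ M+1-s := by omega
    have hnotin : M+1 ∉ S := fun hc => by have := hub _ hc; omega
    have hmem2 : M+1-s ∈ S.erase s := Finset.mem_erase.2 ⟨fun hc => hne1 hc.symm, hmem1⟩
    have hnotin2 : M+1 ∉ (S.erase s).erase (M+1-s) := fun hc =>
      hnotin (Finset.mem_of_mem_erase (Finset.mem_of_mem_erase hc))
    set S' := insert (M+1) ((S.erase s).erase (M+1-s)) with hS'
    have hS'ne : S'.Nonempty := ⟨M+1, Finset.mem_insert_self _ _⟩
    have h0' : 0 ∉ S' := by
      intro hc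
      rcases Finset.mem_insert.1 hc with he | hc2
      · omega
      · exact h0 (Finset.mem_of_mem_erase (Finset.mem_of_mem_erase hc2))
    have hsum' : S'.sum id = S.sum id := by
      rw [hS', Finset.sum_insert hnotin2]
      have e1 : id s + (S.erase s).sum id = S.sum id := Finset.add_sum_erase S id hsS
      have e2 : id (M+1-s) + ((S.erase s).erase (M+1-s)).sum id = (S.erase s).sum id :=
        Finset.add_sum_erase _ id hmem2
      simp only [id_eq] at e1 e2 ⊢
      omega
    have hcard' : S.card = S'.card + 1 := by
      rw [hS', Finset.card_insert_of_notMem hnotin2, Finset.card_erase_of_mem hmem2,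
        Finset.card_erase_of_mem hsS]
      have h2c : 1 < S.card := Finset.one_lt_card.2 ⟨s, hsS, M+1-s, hmem1, hne1⟩
      omega
    have hub' : ∀ x ∈ S', x ≤ M+1 := by
      intro x hx
      rcases Finset.mem_insert.1 hx with rfl | hx2
      · exact le_refl _
      · have := hub x (Finset.mem_of_mem_erase (Finset.mem_of_mem_erase hx2)); omega
    have hmax' : fmax S' = M+1 := fmax_eq (Finset.mem_insert_self _ _) hub'
    have hlb' : ∀ x ∈ S', s < x := by
      intro x hx
      rcases Finset.mem_insert.1 hx with rfl | hx2
      · omega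
      · have hxS := Finset.mem_of_mem_erase (Finset.mem_of_mem_erase hx2)
        have hxne : x ≠ s := (Finset.mem_erase.1 (Finset.mem_of_mem_erase hx2)).1
        have := hlb x hxS
        omega
    have hstair' : stair S' (M+1) = s := by
      apply stair_eq h0' hs1 (by omega)
      · intro x hx
        simp only [Finset.mem_Icc] at hx
        by_cases hx2 : x = M+1
        · exact hx2 ▸ Finset.mem_insert_self _ _
        · have hxS : x ∈ S := hrun (by simp only [Finset.mem_Icc]; omega)
          apply Finset.mem_insert_of_mem
          exact Finset.mem_erase.2 ⟨by omega, Finset.mem_erase.2 ⟨by omega, hxS⟩⟩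
      · intro hc
        rcases Finset.mem_insert.1 hc with he | hc2
        · omega
        · exact (Finset.mem_erase.1 hc2).1 rfl
    have hfr' : frank S' = S := by
      have hsel : ¬ (fmin S' ≤ stair S' (fmax S')) := by
        rw [hmax', hstair']
        have := hlb' (fmin S') (fmin_mem hS'ne)
        omega
      rw [frank, if_neg hsel, hmax', hstair']
      have e1 : S'.erase (M+1) = (S.erase s).erase (M+1-s) := Finset.erase_insert hnotin2
      rw [e1, Finset.insert_erase hmem2, Finset.insert_erase hsS]
    have hp' : ¬ isPent S' := by
      rintro ⟨m, hm1, hSE | hSE⟩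
      · have hmax'' : fmax S' = 2*m-1 := by rw [hSE]; exact fmax_E1 hm1
        have hst'' : stair S' (2*m-1) = m := by rw [hSE]; exact stair_E1 hm1
        have hmin'' : fmin S' = m := by rw [hSE]; exact fmin_E1 hm1
        have hMm : M + 1 = 2*m-1 := by rw [← hmax', hmax'']
        have hsm : s = m := by rw [← hstair', hMm, hst'']
        have := hlb' (fmin S') (fmin_mem hS'ne)
        omega
      · have hmax'' : fmax S' = 2*m := by rw [hSE]; exact fmax_E2 hm1
        have hst'' : stair S' (2*m) = m := by rw [hSE]; exact stair_E2 hm1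
        have hMm : M + 1 = 2*m := by rw [← hmax', hmax'']
        have hsm : s = m := by rw [← hstair', hMm, hst'']
        omega
    rw [hfr]
    exact ⟨hS'ne, h0', hp', hsum', Or.inl hcard', hfr'⟩
  · -- Case B
    have hts : t < s := not_le.1 hcase
    have hfr : frank S = insert t (insert (M-t) (S.erase M)) := by
      rw [frank, if_neg hcase]
    have hM2t : 2*t+1 ≤ M := by
      by_contra h'
      push_neg at h'
      apply hp
      refine ⟨t, ht1, Or.inr ?_⟩
      have hsub : S ⊆ Finset.Icc (t+1) (2*t) := by
        intro x hx
        simp only [Finset.mem_Icc]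
        have h1 := hlb x hx
        have h2 := hub x hx
        omega
      have hc1 : t ≤ S.card := by
        have hcc := Finset.card_le_card hrun
        rw [Nat.card_Icc] at hcc
        omega
      have hc2 : (Finset.Icc (t+1) (2*t)).card ≤ S.card := by
        rw [Nat.card_Icc]; omega
      exact (Finset.eq_of_subset_of_card_le hsub hc2)
    have htnotin : t ∉ S := fun hc => by have := hlb t hc; omega
    have hne : t ≠ M - t := by omega
    set S' := insert t (insert (M-t) (S.erase M)) with hS'
    have htnotin2 : t ∉ insert (M-t) (S.erase M) := by
      intro hc
      rcases Finset.mem_insert.1 hc with he | hc2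
      · omega
      · exact htnotin (Finset.mem_of_mem_erase hc2)
    have hMtnotin2 : M - t ∉ S.erase M := fun hc => hgap (Finset.mem_of_mem_erase hc)
    have hS'ne : S'.Nonempty := ⟨t, Finset.mem_insert_self _ _⟩
    have h0' : 0 ∉ S' := by
      intro hc
      rcases Finset.mem_insert.1 hc with he | hc2
      · omega
      · rcases Finset.mem_insert.1 hc2 with he2 | hc3
        · omega
        · exact h0 (Finset.mem_of_mem_erase hc3)
    have hsum' : S'.sum id = S.sum id := by
      rw [hS', Finset.sum_insert htnotin2, Finset.sum_insert hMtnotin2]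
      have e1 : id M + (S.erase M).sum id = S.sum id := Finset.add_sum_erase S id hMS
      simp only [id_eq] at e1 ⊢
      omega
    have hcard' : S'.card = S.card + 1 := by
      rw [hS', Finset.card_insert_of_notMem htnotin2, Finset.card_insert_of_notMem hMtnotin2,
        Finset.card_erase_of_mem hMS]
      have : 1 ≤ S.card := Finset.card_pos.2 h
      omega
    have hub' : ∀ x ∈ S', x ≤ M-1 := by
      intro x hx
      rcases Finset.mem_insert.1 hx with rfl | hx2
      · omega
      · rcases Finset.mem_insert.1 hx2 with rfl | hx3
        · omega
        · have h1 := hub x (Finset.mem_of_mem_erase hx3)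
          have h2 := (Finset.mem_erase.1 hx3).1
          omega
    have hmemM1 : M - 1 ∈ S' := by
      by_cases ht2 : t = 1
      · apply Finset.mem_insert_of_mem
        apply Finset.mem_insert.2
        left
        omega
      · apply Finset.mem_insert_of_mem
        apply Finset.mem_insert_of_mem
        apply Finset.mem_erase.2
        refine ⟨by omega, hrun ?_⟩
        simp only [Finset.mem_Icc]
        omega
    have hmax' : fmax S' = M-1 := fmax_eq hmemM1 hub'
    have hlb' : ∀ x ∈ S', t ≤ x := by
      intro x hx
      rcases Finset.mem_insert.1 hx with rfl | hx2
      · exact le_refl _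
      · rcases Finset.mem_insert.1 hx2 with rfl | hx3
        · omega
        · have := hlb x (Finset.mem_of_mem_erase hx3); omega
    have hmin' : fmin S' = t := fmin_eq (Finset.mem_insert_self _ _) hlb'
    have hstair_ge : t ≤ stair S' (M-1) := by
      apply stair_ge (by omega)
      intro x hx
      simp only [Finset.mem_Icc] at hx
      by_cases hx2 : x = M - t
      · exact hx2 ▸ Finset.mem_insert_of_mem (Finset.mem_insert_self _ _)
      · apply Finset.mem_insert_of_mem
        apply Finset.mem_insert_of_mem
        apply Finset.mem_erase.2
        refine ⟨by omega, hrun ?_⟩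
        simp only [Finset.mem_Icc]
        omega
    have hfr' : frank S' = S := by
      have hsel : fmin S' ≤ stair S' (fmax S') := by
        rw [hmax', hmin']; exact hstair_ge
      rw [frank, if_pos hsel, hmax', hmin']
      have hM1 : M - 1 + 1 = M := by omega
      rw [hM1]
      have e1 : S'.erase t = insert (M-t) (S.erase M) := Finset.erase_insert htnotin2
      rw [e1, Finset.erase_insert hMtnotin2, Finset.insert_erase hMS]
    have hp' : ¬ isPent S' := by
      rintro ⟨m, hm1, hSE | hSE⟩
      · have hmax'' : fmax S' = 2*m-1 := by rw [hSE]; exact fmax_E1 hm1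
        have hmin'' : fmin S' = m := by rw [hSE]; exact fmin_E1 hm1
        rw [hmax'] at hmax''
        rw [hmin'] at hmin''
        omega
      · have hmax'' : fmax S' = 2*m := by rw [hSE]; exact fmax_E2 hm1
        have hmin'' : fmin S' = m+1 := by rw [hSE]; exact fmin_E2 hm1
        rw [hmax'] at hmax''
        rw [hmin'] at hmin''
        omega
    rw [hfr]
    exact ⟨hS'ne, h0', hp', hsum', Or.inr hcard', hfr'⟩

-- Section 3: signed counts
def D (k : ℕ) : Finset (Finset ℕ) :=
  (Finset.Icc 1 k).powerset.filter (fun S => S.sum id = k)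

noncomputable def c (k : ℕ) : ℤ := ∑ S ∈ D k, (-1)^S.card

lemma mem_D {k : ℕ} {S : Finset ℕ} : S ∈ D k ↔ (S.sum id = k ∧ 0 ∉ S) := by
  constructor
  · intro hS
    rw [D, Finset.mem_filter, Finset.mem_powerset] at hS
    refine ⟨hS.2, fun hc => ?_⟩
    have := hS.1 hc
    simp [Finset.mem_Icc] at this
  · rintro ⟨hsum, h0⟩
    rw [D, Finset.mem_filter, Finset.mem_powerset]
    refine ⟨fun x hx => ?_, hsum⟩
    simp only [Finset.mem_Icc]
    constructor
    · rcases Nat.eq_zero_or_pos x with rfl | h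
      · exact absurd hx h0
      · exact h
    · calc x = id x := rfl
        _ ≤ S.sum id := Finset.single_le_sum (fun i _ => Nat.zero_le (id i)) hx
        _ = k := hsum

lemma sum_nonempty {k : ℕ} {S : Finset ℕ} (hk : 1 ≤ k) (hsum : S.sum id = k) :
    S.Nonempty := by
  rcases S.eq_empty_or_nonempty with rfl | h
  · simp at hsum; omega
  · exact h

lemma mul_pred (n : ℕ) : n * (n - 1) = n * n - n := by
  cases n with
  | zero => rfl
  | succ m =>
    have h : (m+1) * (m+1) = (m+1) * m + (m+1) := by ring
    simp only [Nat.add_sub_cancel]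
    omega

lemma dvd_aux (n : ℕ) : 2 ∣ n * (3*n+1) := by
  rcases Nat.even_or_odd n with ⟨r, hr⟩ | ⟨r, hr⟩
  · exact ⟨r * (3*(r+r)+1), by rw [hr]; ring⟩
  · exact ⟨(2*r+1) * (3*r+2), by rw [hr]; ring⟩

lemma even_aux1 (n : ℕ) : 3 * (n*n) + n = 2 * nP2 n := by
  rw [nP2]
  have hd := dvd_aux n
  have h := aux2 n
  omega

lemma even_aux2 (n : ℕ) : 3 * (n*n) - n = 2 * nP1 n := by
  have h1 := even_aux1 n
  have h2 := nP2_eq n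
  have h3 := aux3 n
  omega

lemma sum_E1 {n : ℕ} (hn : 1 ≤ n) : (Finset.Icc n (2*n-1)).sum id = nP1 n := by
  have hset : Finset.range (2*n) \ Finset.range n = Finset.Icc n (2*n-1) := by
    ext x
    simp only [Finset.mem_sdiff, Finset.mem_range, Finset.mem_Icc]
    omega
  have hsub : Finset.range n ⊆ Finset.range (2*n) := by
    intro x hx; simp only [Finset.mem_range] at hx ⊢; omega
  have hsd := Finset.sum_sdiff (f := id) hsub
  rw [hset] at hsd
  have hsd2 : (∑ x ∈ Finset.Icc n (2*n-1), x) + (∑ x ∈ Finset.range n, x)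
      = ∑ x ∈ Finset.range (2*n), x := hsd
  have hgoal : (Finset.Icc n (2*n-1)).sum id = ∑ x ∈ Finset.Icc n (2*n-1), x := rfl
  rw [hgoal]
  have g1 := Finset.sum_range_id_mul_two (2*n)
  have g2 := Finset.sum_range_id_mul_two n
  rw [mul_pred] at g1 g2
  have e1 : (2*n)*(2*n) = 4 * (n*n) := by ring
  have e2 := even_aux2 n
  have e3 := aux3 n
  have e4 : n ≤ n*n := Nat.le_mul_of_pos_left n hn
  rw [e1] at g1
  omega

lemma sum_E2 {n : ℕ} (hn : 1 ≤ n) : (Finset.Icc (n+1) (2*n)).sum id = nP2 n := by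
  have hset : Finset.range (2*n+1) \ Finset.range (n+1) = Finset.Icc (n+1) (2*n) := by
    ext x
    simp only [Finset.mem_sdiff, Finset.mem_range, Finset.mem_Icc]
    omega
  have hsub : Finset.range (n+1) ⊆ Finset.range (2*n+1) := by
    intro x hx; simp only [Finset.mem_range] at hx ⊢; omega
  have hsd := Finset.sum_sdiff (f := id) hsub
  rw [hset] at hsd
  have hsd2 : (∑ x ∈ Finset.Icc (n+1) (2*n), x) + (∑ x ∈ Finset.range (n+1), x)
      = ∑ x ∈ Finset.range (2*n+1), x := hsd
  have hgoal : (Finset.Icc (n+1) (2*n)).sum id = ∑ x ∈ Finset.Icc (n+1) (2*n), x := rfl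
  rw [hgoal]
  have g1 := Finset.sum_range_id_mul_two (2*n+1)
  have g2 := Finset.sum_range_id_mul_two (n+1)
  have e0 : 2*n+1-1 = 2*n := by omega
  rw [e0] at g1
  have e0b : n+1-1 = n := by omega
  rw [e0b] at g2
  have e1 : (2*n+1)*(2*n) = 4*(n*n) + 2*n := by ring
  have e2 : (n+1)*n = n*n + n := by ring
  have e3 := even_aux1 n
  rw [e1] at g1
  rw [e2] at g2
  omega

lemma card_E1 {n : ℕ} (hn : 1 ≤ n) : (Finset.Icc n (2*n-1)).card = n := by
  rw [Nat.card_Icc]; omega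

lemma card_E2 (n : ℕ) : (Finset.Icc (n+1) (2*n)).card = n := by
  rw [Nat.card_Icc]; omega

lemma nP1_ne_nP2 {m n : ℕ} (hm : 1 ≤ m) (hn : 1 ≤ n) : nP1 m ≠ nP2 n := by
  rcases le_or_gt m n with h | h
  · have h1 : nP1 m ≤ nP1 n := nP1_mono.monotone h
    have h2 := nP1_lt_nP2 hn
    omega
  · have h1 : nP2 n < nP1 (n+1) := nP2_lt_nP1_succ n
    have h2 : nP1 (n+1) ≤ nP1 m := nP1_mono.monotone h
    omega

lemma pent_sum_cases {S : Finset ℕ} {k : ℕ} (hS : isPent S) (hsum : S.sum id = k) :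
    (∃ m, 1 ≤ m ∧ k = nP1 m ∧ S = Finset.Icc m (2*m-1)) ∨
    (∃ m, 1 ≤ m ∧ k = nP2 m ∧ S = Finset.Icc (m+1) (2*m)) := by
  obtain ⟨m, hm, hE | hE⟩ := hS
  · left; exact ⟨m, hm, by rw [← hsum, hE, sum_E1 hm], hE⟩
  · right; exact ⟨m, hm, by rw [← hsum, hE, sum_E2 hm], hE⟩

lemma frank_good {k : ℕ} {S : Finset ℕ} (hk : 1 ≤ k) (hS : S ∈ D k) (hnp : ¬ isPent S) :
    frank S ∈ D k ∧ ¬ isPent (frank S) ∧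
    ((-1:ℤ)^S.card + (-1)^(frank S).card = 0) ∧ frank S ≠ S ∧ frank (frank S) = S := by
  obtain ⟨hsum, h0⟩ := mem_D.1 hS
  have hne := sum_nonempty hk hsum
  obtain ⟨h1, h2, h3, h4, h5, h6⟩ := frank_spec hne h0 hnp
  refine ⟨mem_D.2 ⟨by rw [h4, hsum], h2⟩, h3, ?_, ?_, h6⟩
  · rcases h5 with h | h
    · rw [h, pow_succ]; ring
    · rw [h, pow_succ]; ring
  · intro he
    rw [he] at h5
    omega

lemma c_eq_zero {k : ℕ} (hk : 1 ≤ k) (h : ∀ m, 1 ≤ m → k ≠ nP1 m ∧ k ≠ nP2 m) :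
    c k = 0 := by
  rw [c]
  have hnp : ∀ S ∈ D k, ¬ isPent S := by
    intro S hS hp
    rcases pent_sum_cases hp (mem_D.1 hS).1 with ⟨m, hm, he, _⟩ | ⟨m, hm, he, _⟩
    · exact (h m hm).1 he
    · exact (h m hm).2 he
  refine Finset.sum_involution (fun S _ => frank S) ?_ ?_ ?_ ?_
  · intro S hS
    exact (frank_good hk hS (hnp S hS)).2.2.1
  · intro S hS _
    exact (frank_good hk hS (hnp S hS)).2.2.2.1
  · intro S hS
    exact (frank_good hk hS (hnp S hS)).1
  · intro S hS
    exact (frank_good hk hS (hnp S hS)).2.2.2.2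

lemma c_pent_aux {k : ℕ} {E : Finset ℕ} (hk : 1 ≤ k) (hE : E ∈ D k) (hpE : isPent E)
    (huniq : ∀ S ∈ D k, isPent S → S = E) :
    c k = (-1)^E.card := by
  rw [c, ← Finset.add_sum_erase _ _ hE]
  have hrest : ∑ S ∈ (D k).erase E, ((-1:ℤ))^S.card = 0 := by
    have key : ∀ S ∈ (D k).erase E, ¬ isPent S := by
      intro S hS hp
      obtain ⟨hne, hD⟩ := Finset.mem_erase.1 hS
      exact hne (huniq S hD hp)
    have hmem : ∀ S ∈ (D k).erase E, frank S ∈ (D k).erase E := by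
      intro S hS
      obtain ⟨hne, hD⟩ := Finset.mem_erase.1 hS
      obtain ⟨h1, h2, _, _, _⟩ := frank_good hk hD (key S hS)
      exact Finset.mem_erase.2 ⟨fun hc => h2 (hc ▸ hpE), h1⟩
    refine Finset.sum_involution (fun S _ => frank S) ?_ ?_ hmem ?_
    · intro S hS
      exact (frank_good hk (Finset.mem_erase.1 hS).2 (key S hS)).2.2.1
    · intro S hS _
      exact (frank_good hk (Finset.mem_erase.1 hS).2 (key S hS)).2.2.2.1
    · intro S hS
      exact (frank_good hk (Finset.mem_erase.1 hS).2 (key S hS)).2.2.2.2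
  rw [hrest]
  ring

lemma c_nP1 {n : ℕ} (hn : 1 ≤ n) : c (nP1 n) = (-1)^n := by
  have hk : 1 ≤ nP1 n := le_trans hn (le_nP1 n)
  have h0E : (0:ℕ) ∉ Finset.Icc n (2*n-1) := by
    simp only [Finset.mem_Icc]; omega
  have hE : Finset.Icc n (2*n-1) ∈ D (nP1 n) := mem_D.2 ⟨sum_E1 hn, h0E⟩
  have := c_pent_aux hk hE ⟨n, hn, Or.inl rfl⟩ ?_
  · rw [this, card_E1 hn]
  · intro S hS hp
    rcases pent_sum_cases hp (mem_D.1 hS).1 with ⟨m, hm, he, hSE⟩ | ⟨m, hm, he, hSE⟩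
    · have : m = n := nP1_mono.injective he.symm
      rw [hSE, this]
    · exact absurd he (nP1_ne_nP2 hn hm)

lemma c_nP2 {n : ℕ} (hn : 1 ≤ n) : c (nP2 n) = (-1)^n := by
  have hk : 1 ≤ nP2 n := le_trans hn (le_nP2 n)
  have h0E : (0:ℕ) ∉ Finset.Icc (n+1) (2*n) := by
    simp only [Finset.mem_Icc]; omega
  have hE : Finset.Icc (n+1) (2*n) ∈ D (nP2 n) := mem_D.2 ⟨sum_E2 hn, h0E⟩
  have := c_pent_aux hk hE ⟨n, hn, Or.inr rfl⟩ ?_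
  · rw [this, card_E2 n]
  · intro S hS hp
    rcases pent_sum_cases hp (mem_D.1 hS).1 with ⟨m, hm, he, hSE⟩ | ⟨m, hm, he, hSE⟩
    · exact absurd he.symm (nP1_ne_nP2 hm hn)
    · have : m = n := nP2_mono.injective he.symm
      rw [hSE, this]

-- Section 4
def DD (j : ℕ) : Finset (Finset ℕ) :=
  (Finset.Icc 2 (j+2)).powerset.filter (fun S => S.sum id = j)

lemma mem_DD {j : ℕ} {S : Finset ℕ} : S ∈ DD j ↔ (S.sum id = j ∧ ∀ x ∈ S, 2 ≤ x) := by
  constructor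
  · intro hS
    rw [DD, Finset.mem_filter, Finset.mem_powerset] at hS
    refine ⟨hS.2, fun x hx => ?_⟩
    have := hS.1 hx
    simp only [Finset.mem_Icc] at this
    exact this.1
  · rintro ⟨hsum, h2⟩
    rw [DD, Finset.mem_filter, Finset.mem_powerset]
    refine ⟨fun x hx => ?_, hsum⟩
    simp only [Finset.mem_Icc]
    refine ⟨h2 x hx, ?_⟩
    have hle : id x ≤ S.sum id := Finset.single_le_sum (fun i _ => Nat.zero_le (id i)) hx
    have hle2 : x ≤ S.sum id := hle
    omega

lemma prod_one_sub_X (T : Finset ℕ) :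
    (∏ m ∈ T, (1 - (Polynomial.X : Polynomial ℤ)^m)) =
    ∑ S ∈ T.powerset, (-1)^S.card * Polynomial.X^(S.sum id) := by
  classical
  induction T using Finset.induction_on with
  | empty => simp
  | insert b T ha ih =>
    rw [Finset.prod_insert ha, ih, Finset.sum_powerset_insert ha]
    have he : ∀ S ∈ T.powerset,
        ((-1:Polynomial ℤ))^(insert b S).card * Polynomial.X^((insert b S).sum id)
        = -((-1)^S.card * Polynomial.X^(S.sum id) * Polynomial.X^b) := by
      intro S hS
      have hbS : b ∉ S := fun hc => ha (Finset.mem_powerset.1 hS hc)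
      rw [Finset.card_insert_of_notMem hbS, Finset.sum_insert hbS]
      have hid : id b = b := rfl
      rw [hid, pow_succ, pow_add]
      ring
    rw [Finset.sum_congr rfl he, Finset.sum_neg_distrib, ← Finset.sum_mul]
    ring

lemma a_subsets (j : ℕ) : a j = ∑ S ∈ DD j, (-1:ℤ)^S.card := by
  rw [a, pochInf, PowerSeries.coeff_mk]
  have himg : Finset.Icc 2 (j+2) = (Finset.range (j+1)).image (fun i => 2+i) := by
    ext x
    simp only [Finset.mem_Icc, Finset.mem_image, Finset.mem_range]
    constructor
    · rintro ⟨h1, h2⟩; exact ⟨x - 2, by omega, by omega⟩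
    · rintro ⟨i, hi, rfl⟩; omega
  have hreidx : ∏ i ∈ Finset.range (j+1), (1 - (Polynomial.X:Polynomial ℤ)^(2+i))
      = ∏ m ∈ Finset.Icc 2 (j+2), (1 - Polynomial.X^m) := by
    rw [himg, Finset.prod_image]
    intro x _ y _ hxy
    beta_reduce at hxy
    omega
  rw [hreidx, prod_one_sub_X, Polynomial.finset_sum_coeff]
  have hco : ∀ S ∈ (Finset.Icc 2 (j+2)).powerset,
      ((-1:Polynomial ℤ)^S.card * Polynomial.X^(S.sum id)).coeff j
      = if S.sum id = j then ((-1:ℤ))^S.card else 0 := by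
    intro S _
    have hC : ((-1:Polynomial ℤ))^S.card = Polynomial.C ((-1:ℤ)^S.card) := by
      rw [map_pow, map_neg, map_one]
    rw [hC, Polynomial.coeff_C_mul, Polynomial.coeff_X_pow]
    by_cases h : S.sum id = j
    · have h' : j = S.sum id := h.symm
      rw [if_pos h', if_pos h, mul_one]
    · have h' : ¬ (j = S.sum id) := fun hc => h hc.symm
      rw [if_neg h', if_neg h, mul_zero]
  rw [Finset.sum_congr rfl hco, ← Finset.sum_filter]
  rfl

lemma a_zero : a 0 = 1 := by
  rw [a_subsets]
  have : DD 0 = {∅} := by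
    ext S
    simp only [Finset.mem_singleton]
    rw [mem_DD]
    constructor
    · rintro ⟨hsum, h2⟩
      rcases S.eq_empty_or_nonempty with rfl | ⟨x, hx⟩
      · rfl
      · have hx2 := h2 x hx
        have : x ≤ S.sum id := by
          calc x = id x := rfl
            _ ≤ S.sum id := Finset.single_le_sum (fun i _ => Nat.zero_le (id i)) hx
        omega
    · rintro rfl
      exact ⟨rfl, by simp⟩
  rw [this]
  simp

lemma a_rec {j : ℕ} (hj : 1 ≤ j) : a j = a (j-1) + c j := by
  have hsplit := Finset.sum_filter_add_sum_filter_not (D j) (fun S => 1 ∈ S)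
    (fun S => ((-1:ℤ))^S.card)
  have h2 : (D j).filter (fun S => 1 ∉ S) = DD j := by
    ext S
    rw [Finset.mem_filter, mem_D, mem_DD]
    constructor
    · rintro ⟨⟨hsum, h0⟩, h1⟩
      refine ⟨hsum, fun x hx => ?_⟩
      have hx0 : x ≠ 0 := fun hc => h0 (hc ▸ hx)
      have hx1 : x ≠ 1 := fun hc => h1 (hc ▸ hx)
      omega
    · rintro ⟨hsum, hge⟩
      refine ⟨⟨hsum, fun hc => by have := hge 0 hc; omega⟩, fun hc => by have := hge 1 hc; omega⟩
  have h3 : ∑ S ∈ (D j).filter (fun S => 1 ∈ S), ((-1:ℤ))^S.card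
      = -∑ T ∈ DD (j-1), ((-1:ℤ))^T.card := by
    rw [← Finset.sum_neg_distrib]
    refine Finset.sum_nbij' (fun S => S.erase 1) (fun T => insert 1 T) ?_ ?_ ?_ ?_ ?_
    · intro S hS
      obtain ⟨hD, h1⟩ := Finset.mem_filter.1 hS
      obtain ⟨hsum, h0⟩ := mem_D.1 hD
      have he : id 1 + (S.erase 1).sum id = S.sum id := Finset.add_sum_erase S id h1
      have he2 : 1 + (S.erase 1).sum id = S.sum id := he
      rw [mem_DD]
      constructor
      · show (S.erase 1).sum id = j - 1
        omega
      · intro x hx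
        obtain ⟨hx1, hxS⟩ := Finset.mem_erase.1 hx
        have hx0 : x ≠ 0 := fun hc => h0 (hc ▸ hxS)
        omega
    · intro T hT
      obtain ⟨hsum, hge⟩ := mem_DD.1 hT
      have h1T : 1 ∉ T := fun hc => by have := hge 1 hc; omega
      rw [Finset.mem_filter, mem_D]
      refine ⟨⟨?_, ?_⟩, Finset.mem_insert_self _ _⟩
      · rw [Finset.sum_insert h1T, hsum]
        simp only [id_eq]
        omega
      · intro hc
        rcases Finset.mem_insert.1 hc with hc2 | hc2
        · omega
        · have := hge 0 hc2; omega
    · intro S hS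
      exact Finset.insert_erase (Finset.mem_filter.1 hS).2
    · intro T hT
      obtain ⟨hsum, hge⟩ := mem_DD.1 hT
      exact Finset.erase_insert (fun hc => by have := hge 1 hc; omega)
    · intro S hS
      obtain ⟨hD, h1⟩ := Finset.mem_filter.1 hS
      have hcS : 0 < S.card := Finset.card_pos.2 ⟨1, h1⟩
      have hce : S.card = (S.erase 1).card + 1 := by
        rw [Finset.card_erase_of_mem h1]; omega
      show ((-1:ℤ))^S.card = -((-1:ℤ))^((S.erase 1).card)
      rw [hce, pow_succ]
      ring
  have ha1 := a_subsets j
  have ha2 := a_subsets (j-1)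
  rw [c]
  rw [← hsplit, h3, h2, ← ha1, ← ha2]
  ring

-- Section 5: assembly
lemma c_val {j n : ℕ} (h1 : nP2 (2*n) < j) (h2 : j < nP2 (2*n+2)) :
    c j = (if j = nP1 (2*n+1) then -1 else if j = nP2 (2*n+1) then -1
           else if j = nP1 (2*n+2) then 1 else 0) := by
  by_cases e1 : j = nP1 (2*n+1)
  · rw [if_pos e1, e1, c_nP1 (by omega), pow_succ, pow_mul]
    norm_num
  · rw [if_neg e1]
    by_cases e2 : j = nP2 (2*n+1)
    · rw [if_pos e2, e2, c_nP2 (by omega), pow_succ, pow_mul]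
      norm_num
    · rw [if_neg e2]
      by_cases e3 : j = nP1 (2*n+2)
      · rw [if_pos e3, e3, c_nP1 (by omega)]
        have he : 2*n+2 = 2*(n+1) := by ring
        rw [he, pow_mul]
        norm_num
      · rw [if_neg e3]
        apply c_eq_zero (by omega)
        intro m hm
        constructor
        · intro he
          have hA : 2*n+1 ≤ m := by
            by_contra hc
            push_neg at hc
            have g1 : nP1 m ≤ nP1 (2*n) := nP1_mono.monotone (by omega)
            have g2 : nP1 (2*n) ≤ nP2 (2*n) := nP1_le_nP2 _
            omega
          have hB : m < 2*n+3 := by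
            by_contra hc
            push_neg at hc
            have g1 : nP1 (2*n+3) ≤ nP1 m := nP1_mono.monotone hc
            have g2 : nP2 (2*n+2) < nP1 (2*n+3) := nP2_lt_nP1_succ _
            omega
          have hm2 : m = 2*n+1 ∨ m = 2*n+2 := by omega
          rcases hm2 with rfl | rfl
          · exact e1 he
          · exact e3 he
        · intro he
          have hA : 2*n+1 ≤ m := by
            by_contra hc
            push_neg at hc
            have g1 : nP2 m ≤ nP2 (2*n) := nP2_mono.monotone (by omega)
            omega
          have hB : m < 2*n+2 := by
            by_contra hc
            push_neg at hc
            have g1 : nP2 (2*n+2) ≤ nP2 m := nP2_mono.monotone hc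
            omega
          have : m = 2*n+1 := by omega
          exact e2 (this ▸ he)

lemma main (j : ℕ) : ∀ n : ℕ, nP2 (2*n) ≤ j → j < nP2 (2*n+2) →
    a j = (if nP2 (2*n) ≤ j ∧ j < nP1 (2*n+1) then 1
           else if nP2 (2*n+1) ≤ j ∧ j < nP1 (2*n+2) then -1 else 0) := by
  induction j using Nat.strong_induction_on with
  | _ j IH =>
  intro n hlo hhi
  have b01 : nP2 (2*n) < nP1 (2*n+1) := nP2_lt_nP1_succ _
  have b12 : nP1 (2*n+1) < nP2 (2*n+1) := nP1_lt_nP2 (by omega)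
  have b23 : nP2 (2*n+1) < nP1 (2*n+2) := nP2_lt_nP1_succ _
  have b34 : nP1 (2*n+2) < nP2 (2*n+2) := nP1_lt_nP2 (by omega)
  rcases Nat.eq_zero_or_pos j with rfl | hj
  · rw [a_zero, if_pos ⟨hlo, by omega⟩]
  · rcases eq_or_lt_of_le hlo with heq | hgt
    · -- j = nP2 (2n), start of block
      have hn1 : 1 ≤ n := by
        by_contra hcon
        push_neg at hcon
        have hn0 : n = 0 := by omega
        rw [hn0] at heq
        have : nP2 (2*0) = 0 := rfl
        omega
      have hrec := a_rec hj
      have hc : c j = 1 := by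
        rw [← heq, c_nP2 (by omega), pow_mul]
        norm_num
      have he2 : 2*(n-1)+2 = 2*n := by omega
      have hmono : nP2 (2*(n-1)) < nP2 (2*n) := nP2_mono (by omega)
      have hIH := IH (j-1) (by omega) (n-1) (by omega) (by rw [he2]; omega)
      have c1 : nP1 (2*(n-1)+1) ≤ j - 1 := by
        have g1 : nP1 (2*(n-1)+1) < nP1 (2*n) := nP1_mono (by omega)
        have g2 : nP1 (2*n) < nP2 (2*n) := nP1_lt_nP2 (by omega)
        omega
      have c2 : nP1 (2*(n-1)+2) ≤ j - 1 := by
        have hEqf : nP1 (2*(n-1)+2) = nP1 (2*n) := by rw [he2]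
        have g2 : nP1 (2*n) < nP2 (2*n) := nP1_lt_nP2 (by omega)
        omega
      have hIH0 : a (j-1) = 0 := by
        rw [hIH]
        split_ifs with u v
        · omega
        · omega
        · rfl
      rw [hrec, hIH0, hc, if_pos ⟨hlo, by omega⟩]
      norm_num
    · have hrec := a_rec hj
      have hcv := c_val hgt hhi
      have hIH := IH (j-1) (by omega) n (by omega) (by omega)
      rw [hrec, hIH, hcv]
      split_ifs <;> omega

lemma exists_block (j : ℕ) : ∃ n : ℕ, nP2 (2*n) ≤ j ∧ j < nP2 (2*n+2) := by
  have hp0 : nP2 (2*0) ≤ j := by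
    have : nP2 (2*0) = 0 := rfl
    omega
  set n := Nat.findGreatest (fun m => nP2 (2*m) ≤ j) j with hn
  have hspec : nP2 (2*n) ≤ j :=
    Nat.findGreatest_spec (P := fun m => nP2 (2*m) ≤ j) (Nat.zero_le j) hp0
  refine ⟨n, hspec, ?_⟩
  by_contra hcon
  push_neg at hcon
  have hb : n + 1 ≤ j := by
    have g1 : 2*n+2 ≤ nP2 (2*n+2) := le_nP2 _
    omega
  have := Nat.findGreatest_is_greatest (P := fun m => nP2 (2*m) ≤ j)
    (hn ▸ Nat.lt_succ_self n) hb
  have g2 : 2*(n+1) = 2*n+2 := by ring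
  rw [g2] at this
  exact this hcon

theorem q2_pochhammer_coeffs :
    (∀ j : ℕ, ∃! n : ℕ, p2 (2 * n) ≤ (j : ℤ) ∧ (j : ℤ) < p2 (2 * n + 2)) ∧
    (∀ j n : ℕ, p2 (2 * n) ≤ (j : ℤ) → (j : ℤ) < p2 (2 * n + 2) →
      a j = if p2 (2 * n) ≤ (j : ℤ) ∧ (j : ℤ) < p1 (2 * n + 1) then 1
            else if p2 (2 * n + 1) ≤ (j : ℤ) ∧ (j : ℤ) < p1 (2 * n + 2) then -1
            else 0) ∧
    (∀ j : ℕ, a j ∈ ({-1, 0, 1} : Set ℤ)) := by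
  have cle : ∀ (m j : ℕ), p2 m ≤ (j:ℤ) ↔ nP2 m ≤ j := by
    intro m j
    rw [← nP2_cast]
    exact_mod_cast Iff.rfl
  have clt : ∀ (m j : ℕ), (j:ℤ) < p2 m ↔ j < nP2 m := by
    intro m j
    rw [← nP2_cast]
    exact_mod_cast Iff.rfl
  have clt1 : ∀ (m j : ℕ), (j:ℤ) < p1 m ↔ j < nP1 m := by
    intro m j
    rw [← nP1_cast]
    exact_mod_cast Iff.rfl
  have part2 : ∀ j n : ℕ, p2 (2 * n) ≤ (j : ℤ) → (j : ℤ) < p2 (2 * n + 2) →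
      a j = if p2 (2 * n) ≤ (j : ℤ) ∧ (j : ℤ) < p1 (2 * n + 1) then 1
            else if p2 (2 * n + 1) ≤ (j : ℤ) ∧ (j : ℤ) < p1 (2 * n + 2) then -1
            else 0 := by
    intro j n h1 h2
    rw [main j n ((cle _ _).1 h1) ((clt _ _).1 h2)]
    have e1 : (p2 (2*n) ≤ (j:ℤ) ∧ (j:ℤ) < p1 (2*n+1)) ↔ (nP2 (2*n) ≤ j ∧ j < nP1 (2*n+1)) :=
      and_congr (cle _ _) (clt1 _ _)
    have e2 : (p2 (2*n+1) ≤ (j:ℤ) ∧ (j:ℤ) < p1 (2*n+2)) ↔ (nP2 (2*n+1) ≤ j ∧ j < nP1 (2*n+2)) :=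
      and_congr (cle _ _) (clt1 _ _)
    simp only [e1, e2]
  refine ⟨?_, part2, ?_⟩
  · intro j
    obtain ⟨n, hn1, hn2⟩ := exists_block j
    refine ⟨n, ⟨(cle _ _).2 hn1, (clt _ _).2 hn2⟩, ?_⟩
    intro m ⟨hm1, hm2⟩
    have hm1' := (cle _ _).1 hm1
    have hm2' := (clt _ _).1 hm2
    by_contra hne
    rcases Nat.lt_or_ge m n with h | h
    · have : nP2 (2*m+2) ≤ nP2 (2*n) := nP2_mono.monotone (by omega)
      omega
    · have hmn : n < m := by omega
      have : nP2 (2*n+2) ≤ nP2 (2*m) := nP2_mono.monotone (by omega)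
      omega
  · intro j
    obtain ⟨n, hn1, hn2⟩ := exists_block j
    rw [main j n hn1 hn2]
    split_ifs <;> simp
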